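/- Lemma 3.1 part 5: For every integer m ≥ 2, |⟨1, Ψ^{(m)}(1)⟩| ≤ 4·(2c)^{m−2}·b². -/

import Mathlib

open Matrix MeasureTheory Finset
open scoped ComplexOrder
noncomputable section

/-- The algebra `M_d(ℂ)` of `d × d` complex matrices. -/
abbrev Md (d : ℕ) := Matrix (Fin d) (Fin d) ℂ

/-- KMS inner product `⟨x,y⟩ = tr(s x* s y)` where `s = σ^{1/2}`. -/
def kmsInner {d : ℕ} (s x y : Md d) : ℂ := (s * xᴴ * s * y).trace

/-- KMS norm `‖x‖₂ = tr(s x* s x)^{1/2}` where `s = σ^{1/2}`. -/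
def kmsNorm {d : ℕ} (s x : Md d) : ℝ := Real.sqrt ((s * xᴴ * s * x).trace.re)

/-- Operator norm of a map on `M_d(ℂ)` induced by the KMS norm. -/
def kmsOpNorm {d : ℕ} (s : Md d) (η : Md d → Md d) : ℝ :=
  sInf {C : ℝ | 0 ≤ C ∧ ∀ x, kmsNorm s (η x) ≤ C * kmsNorm s x}

/-- Spectral (operator) norm of a matrix, i.e. the operator norm of the induced map
on Euclidean space. -/
def specNorm {d : ℕ} (x : Md d) : ℝ :=
  ‖(LinearMap.toContinuousLinearMap (Matrix.toEuclideanLin x))‖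

/-- The positive square root `σ^{1/2}` of a positive definite state. -/
def sqrtm {d : ℕ} (σ : Md d) (hσ : σ.PosDef) : Md d := (hσ.posSemidef.1.eigenvectorUnitary : Md d) *
    diagonal ((↑) ∘ (√·) ∘ hσ.posSemidef.1.eigenvalues) *
    star (hσ.posSemidef.1.eigenvectorUnitary : Md d)

/-- The quantum channel (Heisenberg picture) `Φ(x) = Σ_i V_i* x V_i`. -/
def channel {d : ℕ} {I : Type*} [Fintype I] (V : I → Md d) (x : Md d) : Md d :=
  ∑ i, (V i)ᴴ * x * V i

/-- The dual (Schrödinger picture) channel `Φ*(ρ) = Σ_i V_i ρ V_i*`. -/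
def channelDual {d : ℕ} {I : Type*} [Fintype I] (V : I → Md d) (ρ : Md d) : Md d :=
  ∑ i, V i * ρ * (V i)ᴴ

/-- The KMS adjoint `Φ† = Γ_σ^{-1/2} ∘ Φ* ∘ Γ_σ^{1/2}` of the channel with Kraus
operators `V`, where `s = σ^{1/2}`. -/
def channelKMSAdj {d : ℕ} {I : Type*} [Fintype I] (V : I → Md d) (s : Md d) (x : Md d) : Md d :=
  s⁻¹ * channelDual V (s * x * s) * s⁻¹

/-- Irreducibility of a completely positive map given by Kraus operators `W`:
for every nonzero `v` the span of all `W_{j_n} ⋯ W_{j_1} v` is everything. -/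
def IrredKraus {d : ℕ} {J : Type*} (W : J → Md d) : Prop :=
  ∀ v : Fin d → ℂ, v ≠ 0 →
    Submodule.span ℂ {u : Fin d → ℂ | ∃ l : List J, u = ((l.map W).prod).mulVec v} = ⊤

/-- The operator `V_{i_n} ⋯ V_{i_1}` associated with a measurement trajectory. -/
def trajOp {d : ℕ} {I : Type*} (V : I → Md d) {n : ℕ} (ω : Fin n → I) : Md d :=
  ((List.ofFn fun k => V (ω k)).reverse).prod

/-- The probability `tr(V_{i_n} ⋯ V_{i_1} ρ V_{i_1}* ⋯ V_{i_n}*)` of a trajectory. -/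
def trajProb {d : ℕ} {I : Type*} (V : I → Md d) (ρ : Md d) {n : ℕ} (ω : Fin n → I) : ℝ :=
  ((trajOp V ω) * ρ * (trajOp V ω)ᴴ).trace.re

/-- The function `h(x) = 1/(√(1+x) + x/2 + 1)` from the Bernstein bound. -/
def hfun (x : ℝ) : ℝ := (Real.sqrt (1 + x) + x / 2 + 1)⁻¹

/-- The norm `‖(Id - Φ)^{-1}|_F‖_∞` of the inverse of `Id - Φ` on
`F = {x : tr(σ x) = 0}`, with respect to the spectral norm. -/
def pseudoResNorm {d : ℕ} {I : Type*} [Fintype I] (V : I → Md d) (σ : Md d) : ℝ :=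
  sInf {C : ℝ | 0 ≤ C ∧ ∀ x : Md d, (σ * x).trace = 0 →
    specNorm x ≤ C * specNorm (x - channel V x)}

/-- The deformed map `Φ^{(k)}(x) = Σ_i f(i)^k V_i* x V_i`. -/
def phiK {d : ℕ} {I : Type*} [Fintype I] (V : I → Md d) (f : I → ℝ) (k : ℕ)
    (x : Md d) : Md d :=
  ∑ i, ((f i : ℂ) ^ k) • ((V i)ᴴ * x * V i)

/-- The KMS adjoint `Φ^{(k)†}` of `Φ^{(k)}`, where `s = σ^{1/2}`. -/
def phiKDag {d : ℕ} {I : Type*} [Fintype I] (V : I → Md d) (f : I → ℝ) (s : Md d) (k : ℕ)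
    (x : Md d) : Md d :=
  s⁻¹ * (∑ i, ((f i : ℂ) ^ k) • (V i * (s * x * s) * (V i)ᴴ)) * s⁻¹

/-- The map `Ψ^{(m)} = Σ_{l=0}^m binom(m,l) Φ^{(l)†} ∘ Φ^{(m−l)}`. -/
def psiM {d : ℕ} {I : Type*} [Fintype I] (V : I → Md d) (f : I → ℝ) (s : Md d) (m : ℕ)
    (x : Md d) : Md d :=
  ∑ l ∈ Finset.range (m + 1), (m.choose l : ℂ) • phiKDag V f s l (phiK V f (m - l) x)


/-- The spectral square root of a positive semidefinite matrix. -/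
def psdSqrt {d : ℕ} {B : Md d} (hB : B.PosSemidef) : Md d := (hB.1.eigenvectorUnitary : Md d) *
    diagonal ((↑) ∘ (√·) ∘ hB.1.eigenvalues) *
    star (hB.1.eigenvectorUnitary : Md d)

lemma psdSqrt_mul_self {d : ℕ} {B : Md d} (hB : B.PosSemidef) : psdSqrt hB * psdSqrt hB = B := by
  have hU : star (hB.1.eigenvectorUnitary : Md d) * (hB.1.eigenvectorUnitary : Md d) = 1 :=
    Unitary.coe_star_mul_self _
  have hD : diagonal (((↑) ∘ (√·) ∘ hB.1.eigenvalues : Fin d → ℂ)) *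
      diagonal ((↑) ∘ (√·) ∘ hB.1.eigenvalues) = diagonal (RCLike.ofReal ∘ hB.1.eigenvalues) := by
    rw [diagonal_mul_diagonal]; congr 1; funext i
    simp [← Complex.ofReal_mul, Real.mul_self_sqrt (hB.eigenvalues_nonneg i)]
  conv_rhs => rw [hB.1.spectral_theorem, Unitary.conjStarAlgAut_apply]
  simp only [psdSqrt, mul_assoc]
  rw [← mul_assoc (star _) (hB.1.eigenvectorUnitary : Md d), hU, one_mul, ← mul_assoc (diagonal _),
    hD]

lemma psdSqrt_isHermitian {d : ℕ} {B : Md d} (hB : B.PosSemidef) : (psdSqrt hB)ᴴ = psdSqrt hB := by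
  simp [psdSqrt, Matrix.conjTranspose_mul, Matrix.diagonal_conjTranspose, mul_assoc,
    star_eq_conjTranspose]
  congr 3
  funext i
  simp

/-- The trace of a positive semidefinite matrix is nonnegative. -/
lemma trace_nonneg_psd {d : ℕ} {A : Md d} (hA : A.PosSemidef) : 0 ≤ A.trace := by
  have h : ∀ i, 0 ≤ A i i := by
    intro i
    exact hA.diag_nonneg
  calc (0:ℂ) = ∑ i : Fin d, 0 := by simp
  _ ≤ A.trace := Finset.sum_le_sum fun i _ => h i

/-- The trace of a product of positive semidefinite matrices is nonnegative. -/
lemma trace_mul_nonneg_psd {d : ℕ} {A B : Md d} (hA : A.PosSemidef) (hB : B.PosSemidef) :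
    0 ≤ (A * B).trace := by
  have h1 : A * B = A * psdSqrt hB * psdSqrt hB := by rw [mul_assoc, psdSqrt_mul_self hB]
  rw [h1, Matrix.trace_mul_comm]
  have h2 : psdSqrt hB * (A * psdSqrt hB) = (psdSqrt hB)ᴴ * A * psdSqrt hB := by
    rw [psdSqrt_isHermitian hB, mul_assoc]
  rw [h2]
  exact trace_nonneg_psd (hA.conjTranspose_mul_mul_same _)

/-- **Lemma 3.1 part 5**: for `m ≥ 2`, `|⟨1, Ψ^{(m)}(1)⟩| ≤ 4 (2c)^{m−2} b²`. -/
theorem lemma31_part5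
    {d : ℕ} (hd : 1 ≤ d) {I : Type*} [Fintype I] [Nonempty I]
    (V : I → Md d) (hV : ∑ i, (V i)ᴴ * V i = 1)
    (σ : Md d) (hσ : σ.PosDef) (hσtr : σ.trace = 1)
    (hinv : channelDual V σ = σ)
    (f : I → ℝ) (b c : ℝ) (hb : 0 ≤ b)
    -- max_i |f(i)| = c
    (hbdd : ∀ i, |f i| ≤ c) (hatt : ∃ i, |f i| = c)
    -- π(f²) = b²
    (hvar : ∑ i, (f i) ^ 2 * ((σ * ((V i)ᴴ * V i)).trace).re = b ^ 2)
    (m : ℕ) (hm : 2 ≤ m) :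
    ‖kmsInner (sqrtm σ hσ) 1 (psiM V f (sqrtm σ hσ) m 1)‖ ≤
      4 * (2 * c) ^ (m - 2) * b ^ 2 := by
  
  -- Notation
  obtain ⟨i0, hi0⟩ := hatt
  have hc0 : 0 ≤ c := hi0 ▸ abs_nonneg _
  set s : Md d := sqrtm σ hσ with hs
  have hss : s * s = σ := psdSqrt_mul_self hσ.posSemidef
  have hsH : sᴴ = s := psdSqrt_isHermitian hσ.posSemidef
  have hsU : IsUnit s.det := by
    have hdet : s.det * s.det = σ.det := by rw [← Matrix.det_mul, hss]
    have hσdet : σ.det ≠ 0 := ne_of_gt hσ.det_pos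
    exact isUnit_iff_ne_zero.mpr fun h => hσdet (by rw [← hdet, h, mul_zero])
  have hinvl : s⁻¹ * s = 1 := Matrix.nonsing_inv_mul s hsU
  have hinvr : s * s⁻¹ = 1 := Matrix.mul_nonsing_inv s hsU
  set M : I → Md d := fun i => (V i)ᴴ * V i with hM
  set T : I → I → ℂ := fun i j => (s * M i * s * M j).trace with hT
  -- conjugation by s⁻¹ against σ leaves the trace invariant
  have key0 : ∀ A : Md d, (σ * (s⁻¹ * A * s⁻¹)).trace = A.trace := by
    intro A
    have e1 : σ * (s⁻¹ * A * s⁻¹) = s * (A * s⁻¹) := by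
      rw [← hss, mul_assoc, ← mul_assoc s (s⁻¹ * A) s⁻¹, ← mul_assoc s s⁻¹ A,
        hinvr, one_mul]
    rw [e1, Matrix.trace_mul_comm, mul_assoc, hinvl, mul_one]
  -- trace of σ times phiKDag
  have key1 : ∀ (l : ℕ) (x : Md d), (σ * phiKDag V f s l x).trace
      = ∑ i, (f i : ℂ) ^ l * (s * M i * s * x).trace := by
    intro l x
    rw [phiKDag, key0, Matrix.trace_sum]
    refine Finset.sum_congr rfl fun i _ => ?_
    rw [Matrix.trace_smul, smul_eq_mul]
    simp only [hM]
    congr 1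
    rw [Matrix.trace_mul_comm]
    simp only [← mul_assoc]
    rw [Matrix.trace_mul_comm]
    simp only [← mul_assoc]
  -- phiK applied to 1
  have key2 : ∀ k : ℕ, phiK V f k (1 : Md d) = ∑ j, ((f j : ℂ) ^ k) • M j := by
    intro k
    rw [phiK]
    exact Finset.sum_congr rfl fun j _ => by rw [hM, mul_one]
  -- the inner product as a double sum
  have key3 : kmsInner s 1 (psiM V f s m 1)
      = ∑ i, ∑ j, ((f i : ℂ) + (f j : ℂ)) ^ m * T i j := by
    have e0 : kmsInner s 1 (psiM V f s m 1) = (σ * psiM V f s m 1).trace := by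
      rw [kmsInner, conjTranspose_one, mul_one, hss]
    rw [e0, psiM, Finset.mul_sum, Matrix.trace_sum]
    have e1 : ∀ l ∈ Finset.range (m + 1),
        (σ * (m.choose l : ℂ) • phiKDag V f s l (phiK V f (m - l) 1)).trace
        = ∑ i, ∑ j, ((m.choose l : ℂ) * ((f i : ℂ) ^ l * (f j : ℂ) ^ (m - l))) * T i j := by
      intro l _
      rw [mul_smul_comm, Matrix.trace_smul, smul_eq_mul, key1, Finset.mul_sum]
      refine Finset.sum_congr rfl fun i _ => ?_
      rw [key2, Finset.mul_sum, Matrix.trace_sum, Finset.mul_sum, Finset.mul_sum]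
      refine Finset.sum_congr rfl fun j _ => ?_
      rw [Matrix.mul_smul, Matrix.trace_smul, smul_eq_mul, hT]
      ring
    rw [Finset.sum_congr rfl e1, Finset.sum_comm]
    refine Finset.sum_congr rfl fun i _ => ?_
    rw [Finset.sum_comm]
    refine Finset.sum_congr rfl fun j _ => ?_
    rw [← Finset.sum_mul, add_pow]
    congr 1
    exact Finset.sum_congr rfl fun l _ => by ring
  -- positivity and symmetry of T
  have hMp : ∀ i, (M i).PosSemidef := fun i => Matrix.posSemidef_conjTranspose_mul_self (V i)
  have hTpos : ∀ i j, 0 ≤ T i j := by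
    intro i j
    have h1 : (s * M i * s).PosSemidef := by
      have := (hMp i).mul_mul_conjTranspose_same s
      rwa [hsH] at this
    exact trace_mul_nonneg_psd h1 (hMp j)
  have hTre : ∀ i j, T i j = (((T i j).re : ℝ) : ℂ) := by
    intro i j
    have h := Complex.nonneg_iff.mp (hTpos i j)
    exact Complex.ext (by simp) (by simp [← h.2])
  have hTsymm : ∀ i j, T i j = T j i := by
    intro i j
    rw [hT]
    calc (s * M i * s * M j).trace = ((s * M i) * (s * M j)).trace := by
          simp only [mul_assoc]
    _ = ((s * M j) * (s * M i)).trace := Matrix.trace_mul_comm _ _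
    _ = (s * M j * s * M i).trace := by simp only [mul_assoc]
  set a : I → I → ℝ := fun i j => (T i j).re with ha
  have hapos : ∀ i j, 0 ≤ a i j := fun i j => by
    have := (Complex.nonneg_iff.mp (hTpos i j)).1
    simpa [ha] using this
  have hasymm : ∀ i j, a i j = a j i := fun i j => by rw [ha]; simp [hTsymm i j]
  -- row sums
  have hrow : ∀ i, ∑ j, a i j = ((σ * M i).trace).re := by
    intro i
    have h1 : ∑ j, T i j = (σ * M i).trace := by
      have e : ∑ j, T i j = (s * M i * s * ∑ j, M j).trace := by
        rw [Finset.mul_sum, Matrix.trace_sum]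
      have hVM : ∑ j, M j = (1 : Md d) := by rw [hM]; exact hV
      rw [e, hVM, mul_one, Matrix.trace_mul_comm, ← hss]
      simp only [← mul_assoc]
    calc ∑ j, a i j = (∑ j, T i j).re := by rw [Complex.re_sum]
    _ = ((σ * M i).trace).re := by rw [h1]
  -- the double sum is real
  set S : ℝ := ∑ i, ∑ j, (f i + f j) ^ m * a i j with hS
  have key4 : kmsInner s 1 (psiM V f s m 1) = ((S : ℝ) : ℂ) := by
    rw [key3, hS]
    push_cast
    refine Finset.sum_congr rfl fun i _ => Finset.sum_congr rfl fun j _ => ?_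
    rw [hTre i j]
  rw [key4, Complex.norm_real, Real.norm_eq_abs]
  -- bound each term
  have hterm : ∀ i j : I, |(f i + f j) ^ m * a i j|
      ≤ (2 * c) ^ (m - 2) * ((2 * (f i) ^ 2 + 2 * (f j) ^ 2) * a i j) := by
    intro i j
    rw [abs_mul, abs_of_nonneg (hapos i j), abs_pow]
    have hm' : m = (m - 2) + 2 := by omega
    have h2c : |f i + f j| ≤ 2 * c := by
      calc |f i + f j| ≤ |f i| + |f j| := abs_add_le _ _
      _ ≤ 2 * c := by have := hbdd i; have := hbdd j; linarith
    have h1 : |f i + f j| ^ (m - 2) ≤ (2 * c) ^ (m - 2) :=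
      pow_le_pow_left₀ (abs_nonneg _) h2c _
    have h2 : |f i + f j| ^ 2 ≤ 2 * (f i) ^ 2 + 2 * (f j) ^ 2 := by
      rw [sq_abs]; nlinarith [sq_nonneg (f i - f j)]
    calc |f i + f j| ^ m * a i j = |f i + f j| ^ (m - 2) * |f i + f j| ^ 2 * a i j := by
          rw [← pow_add, ← hm']
    _ ≤ (2 * c) ^ (m - 2) * (2 * (f i) ^ 2 + 2 * (f j) ^ 2) * a i j := by
          apply mul_le_mul_of_nonneg_right _ (hapos i j)
          exact mul_le_mul h1 h2 (pow_nonneg (abs_nonneg _) _) (pow_nonneg (by linarith) _)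
    _ = (2 * c) ^ (m - 2) * ((2 * (f i) ^ 2 + 2 * (f j) ^ 2) * a i j) := by ring
  have hsum1 : ∑ i, ∑ j, (f i) ^ 2 * a i j = b ^ 2 := by
    rw [← hvar]
    refine Finset.sum_congr rfl fun i _ => ?_
    rw [← Finset.mul_sum, hrow i]
  have hsum2 : ∑ i, ∑ j, (f j) ^ 2 * a i j = b ^ 2 := by
    rw [Finset.sum_comm]
    rw [← hsum1]
    refine Finset.sum_congr rfl fun x _ => Finset.sum_congr rfl fun y _ => ?_
    rw [hasymm y x]
  calc |S| ≤ ∑ i, ∑ j, |(f i + f j) ^ m * a i j| := by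
        refine (Finset.abs_sum_le_sum_abs _ _).trans ?_
        exact Finset.sum_le_sum fun i _ => Finset.abs_sum_le_sum_abs _ _
  _ ≤ ∑ i, ∑ j, (2 * c) ^ (m - 2) * ((2 * (f i) ^ 2 + 2 * (f j) ^ 2) * a i j) :=
        Finset.sum_le_sum fun i _ => Finset.sum_le_sum fun j _ => hterm i j
  _ = (2 * c) ^ (m - 2) * (2 * (∑ i, ∑ j, (f i) ^ 2 * a i j)
        + 2 * (∑ i, ∑ j, (f j) ^ 2 * a i j)) := by
        have hsplit : ∀ i j : I, (2 * c) ^ (m - 2) * ((2 * (f i) ^ 2 + 2 * (f j) ^ 2) * a i j)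
            = (2 * c) ^ (m - 2) * 2 * ((f i) ^ 2 * a i j)
              + (2 * c) ^ (m - 2) * 2 * ((f j) ^ 2 * a i j) := fun i j => by ring
        simp only [hsplit, Finset.sum_add_distrib, ← Finset.mul_sum]
        ring
  _ = 4 * (2 * c) ^ (m - 2) * b ^ 2 := by rw [hsum1, hsum2]; ring
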